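/- The pure translations in Γ_T are exactly the translations by vectors of the lattice ℤ × ℤ × 2ℤ, and likewise the pure translations in Γ_D are exactly the translations by vectors of ℤ × ℤ × 2ℤ. That is, for w ∈ ℝ³: T_w ∈ Γ_T if and only if w ∈ ℤ × ℤ × 2ℤ, and T_w ∈ Γ_D if and only if w ∈ ℤ × ℤ × 2ℤ; moreover every element of Γ_T (resp. Γ_D) whose linear part is the identity is a translation T_w with w ∈ ℤ × ℤ × 2ℤ. -/

import Mathlib

noncomputable section

/-- Points of `ℝ³`, written as `(x, y, z)`. -/
abbrev R3 : Type := ℝ × ℝ × ℝ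

/-- The translation `T_w : x ↦ x + w` of `ℝ³`, as a bijection (it is an isometry). -/
def transl (w : R3) : Equiv.Perm R3 := Equiv.addRight w

/-- The quarter-turn screw motion `τ(x,y,z) = (−y, x, z+1/2)`, as a bijection
(it is an isometry). -/
def tauE : Equiv.Perm R3 where
  toFun p := (-p.2.1, p.1, p.2.2 + 1/2)
  invFun p := (p.2.1, -p.1, p.2.2 - 1/2)
  left_inv p := by obtain ⟨x, y, z⟩ := p; simp
  right_inv p := by obtain ⟨x, y, z⟩ := p; simp

/-- The half-turn screw motion `ρ_x(x,y,z) = (x+1/2, −y, −z)`, as a bijection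
(it is an isometry). -/
def rhoxE : Equiv.Perm R3 where
  toFun p := (p.1 + 1/2, -p.2.1, -p.2.2)
  invFun p := (p.1 - 1/2, -p.2.1, -p.2.2)
  left_inv p := by obtain ⟨x, y, z⟩ := p; simp
  right_inv p := by obtain ⟨x, y, z⟩ := p; simp

/-- The half-turn screw motion `ρ_y(x,y,z) = (−x, y+1/2, 1−z)`, as a bijection
(it is an isometry). -/
def rhoyE : Equiv.Perm R3 where
  toFun p := (-p.1, p.2.1 + 1/2, 1 - p.2.2)
  invFun p := (-p.1, p.2.1 - 1/2, 1 - p.2.2)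
  left_inv p := by obtain ⟨x, y, z⟩ := p; simp
  right_inv p := by obtain ⟨x, y, z⟩ := p; simp

/-- `Γ_T`, the covering group of the tetracosm Tetra: the group generated by the
translations `T_{(1,0,0)}, T_{(0,1,0)}, T_{(0,0,2)}` and `τ`. -/
def GammaT : Subgroup (Equiv.Perm R3) :=
  Subgroup.closure {transl (1, 0, 0), transl (0, 1, 0), transl (0, 0, 2), tauE}

/-- `Γ_D`, the covering group of the didicosm Didi: the group generated by the
translations `T_{(1,0,0)}, T_{(0,1,0)}, T_{(0,0,2)}` and `ρ_x`, `ρ_y`. -/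
def GammaD : Subgroup (Equiv.Perm R3) :=
  Subgroup.closure {transl (1, 0, 0), transl (0, 1, 0), transl (0, 0, 2), rhoxE, rhoyE}

end

/-! ### Auxiliary material -/

noncomputable section Aux

lemma transl_apply (w p : R3) : transl w p = p + w := rfl

lemma transl_add (u v : R3) : transl (u + v) = transl u * transl v := by
  ext p <;> simp [transl, Equiv.Perm.mul_apply] <;> ring

lemma transl_zero : transl 0 = 1 := by
  ext p <;> simp [transl]

def translHom : Multiplicative R3 →* Equiv.Perm R3 where
  toFun w := transl w.toAdd
  map_one' := transl_zero
  map_mul' x y := transl_add x.toAdd y.toAdd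

lemma transl_zpow (w : R3) (j : ℤ) : transl w ^ j = transl (j • w) := by
  have := (translHom.map_zpow (Multiplicative.ofAdd w) j).symm
  simpa [translHom, toAdd_zpow] using this

lemma lattice_mem {G : Subgroup (Equiv.Perm R3)}
    (h1 : transl (1,0,0) ∈ G) (h2 : transl (0,1,0) ∈ G) (h3 : transl (0,0,2) ∈ G)
    (m n k : ℤ) : transl ((m : ℝ), (n : ℝ), 2 * (k : ℝ)) ∈ G := by
  have e : ((m : ℝ), (n : ℝ), 2 * (k : ℝ)) =
      m • ((1:ℝ),(0:ℝ),(0:ℝ)) + (n • ((0:ℝ),(1:ℝ),(0:ℝ)) + k • ((0:ℝ),(0:ℝ),(2:ℝ))) := by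
    simp [Prod.ext_iff, zsmul_eq_mul]; ring
  rw [e, transl_add, transl_add, ← transl_zpow, ← transl_zpow, ← transl_zpow]
  exact mul_mem (zpow_mem h1 m) (mul_mem (zpow_mem h2 n) (zpow_mem h3 k))

open Complex

def cxy (p : R3) : ℂ := p.1 + p.2.1 * I

lemma gauss : ∀ (j : ℕ) (m n : ℤ), ∃ m' n' : ℤ,
    (I : ℂ) ^ j * ((m : ℂ) + (n : ℂ) * I) = (m' : ℂ) + (n' : ℂ) * I := by
  intro j
  induction j with
  | zero => intro m n; exact ⟨m, n, by simp⟩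
  | succ j ih =>
    intro m n
    obtain ⟨m', n', h⟩ := ih (-n) m
    refine ⟨m', n', ?_⟩
    rw [pow_succ, mul_assoc]
    have key : I * ((m : ℂ) + (n : ℂ) * I) = ((-n : ℤ) : ℂ) + ((m : ℤ) : ℂ) * I := by
      push_cast
      linear_combination (n : ℂ) * I_mul_I
    rw [key]
    exact h

/-- The invariant predicate for the tetracosm group: `γ` acts on the `xy`-plane
(identified with `ℂ`) as `w ↦ I^j w + (m + n i)` and on `z` as `z ↦ z + j/2 + 2k`. -/
lemma four_dvd_of_I_pow (j : ℕ) (h : (I : ℂ) ^ j = 1) : 4 ∣ j := by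
  have hdiv : j % 4 + 4 * (j / 4) = j := Nat.mod_add_div j 4
  have h2 : (I : ℂ) ^ (j % 4) = 1 := by
    rw [← hdiv, pow_add, pow_mul, I_pow_four, one_pow, mul_one] at h
    exact h
  have hcase : j % 4 = 0 ∨ j % 4 = 1 ∨ j % 4 = 2 ∨ j % 4 = 3 := by omega
  rcases hcase with h' | h' | h' | h'
  · exact Nat.dvd_of_mod_eq_zero h'
  · rw [h'] at h2; simp [Complex.ext_iff] at h2
  · rw [h'] at h2; rw [show (2:ℕ) = 1 + 1 by rfl, pow_add, pow_one, I_mul_I] at h2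
    norm_num at h2
  · rw [h'] at h2
    rw [show (3:ℕ) = 1 + 1 + 1 by rfl, pow_add, pow_add, pow_one, mul_assoc, I_mul_I] at h2
    simp [Complex.ext_iff] at h2

def PT (γ : Equiv.Perm R3) : Prop :=
  ∃ (j : ℕ) (m n k : ℤ), ∀ p : R3,
    cxy (γ p) = I ^ j * cxy p + ((m : ℂ) + (n : ℂ) * I) ∧
    (γ p).2.2 = p.2.2 + (j : ℝ) / 2 + 2 * (k : ℝ)

lemma I_pow_four_mul (j : ℕ) : (I : ℂ) ^ (3 * j) * I ^ j = 1 := by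
  rw [← pow_add]
  have : 3 * j + j = 4 * j := by ring
  rw [this, pow_mul, I_pow_four, one_pow]

def SGT : Subgroup (Equiv.Perm R3) where
  carrier := {γ | PT γ}
  one_mem' := ⟨0, 0, 0, 0, fun p => by simp [cxy]⟩
  mul_mem' := by
    rintro a b ⟨j₁, m₁, n₁, k₁, h₁⟩ ⟨j₂, m₂, n₂, k₂, h₂⟩
    obtain ⟨m₃, n₃, hg⟩ := gauss j₁ m₂ n₂
    refine ⟨j₁ + j₂, m₃ + m₁, n₃ + n₁, k₁ + k₂, fun p => ?_⟩
    have hb := h₂ p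
    have ha := h₁ (b p)
    rw [Equiv.Perm.mul_apply]
    constructor
    · rw [ha.1, hb.1]
      push_cast
      linear_combination hg
    · rw [ha.2, hb.2]
      push_cast
      ring
  inv_mem' := by
    rintro a ⟨j, m, n, k, h⟩
    obtain ⟨m', n', hg⟩ := gauss (3 * j) (-m) (-n)
    refine ⟨3 * j, m', n', -(j : ℤ) - k, fun p => ?_⟩
    have hp := h (a⁻¹ p)
    rw [← Equiv.Perm.mul_apply, mul_inv_cancel, Equiv.Perm.one_apply] at hp
    have hI := I_pow_four_mul j
    constructor
    · push_cast at hg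
      linear_combination (-(I : ℂ) ^ (3 * j)) * hp.1 + hg - cxy (a⁻¹ p) * hI
    · have := hp.2
      push_cast
      push_cast at this
      linarith

/-- The invariant predicate for the didicosm group: each coordinate is sent to
`±`(itself)` + c` with half-integer `c` whose parity is tied to the signs. -/
def PD (γ : Equiv.Perm R3) : Prop :=
  ∃ (s t : ℕ) (m n k : ℤ),
    ((m : ZMod 2) = (t : ZMod 2) ∧ (n : ZMod 2) = (s : ZMod 2) ∧ (k : ZMod 2) = (s : ZMod 2)) ∧
    ∀ p : R3, γ p = ((-1)^s * p.1 + (m : ℝ)/2, (-1)^t * p.2.1 + (n : ℝ)/2,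
      (-1)^(s+t) * p.2.2 + (k : ℝ))

lemma neg_one_sq_pow (s : ℕ) : ((-1 : ℝ))^s * (-1)^s = 1 := by
  rw [← mul_pow]; norm_num

lemma zmod2_add_self (x : ZMod 2) : x + x = 0 := by fin_cases x <;> decide

lemma zmod2_neg (x : ZMod 2) : -x = x := by exact ZMod.neg_eq_self_mod_two x

lemma zmod2_negone_pow (s : ℕ) : ((-1 : ZMod 2))^s = 1 := by
  have : (-1 : ZMod 2) = 1 := by decide
  rw [this, one_pow]

def SGD : Subgroup (Equiv.Perm R3) where
  carrier := {γ | PD γ}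
  one_mem' := ⟨0, 0, 0, 0, 0, by refine ⟨by decide, by decide, by decide⟩, fun p => by simp⟩
  mul_mem' := by
    rintro a b ⟨s₁, t₁, m₁, n₁, k₁, ⟨pm₁, pn₁, pk₁⟩, h₁⟩ ⟨s₂, t₂, m₂, n₂, k₂, ⟨pm₂, pn₂, pk₂⟩, h₂⟩
    refine ⟨s₁ + s₂, t₁ + t₂, (-1)^s₁ * m₂ + m₁, (-1)^t₁ * n₂ + n₁, (-1)^(s₁+t₁) * k₂ + k₁,
      ⟨?_, ?_, ?_⟩, fun p => ?_⟩
    · push_cast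
      rw [zmod2_negone_pow, pm₁, pm₂]; push_cast; ring
    · push_cast
      rw [zmod2_negone_pow, pn₁, pn₂]; push_cast; ring
    · push_cast
      rw [zmod2_negone_pow, pk₁, pk₂]; push_cast; ring
    · rw [Equiv.Perm.mul_apply, h₂ p, h₁]
      simp only [Prod.ext_iff]
      refine ⟨?_, ?_, ?_⟩ <;> push_cast <;> ring
  inv_mem' := by
    rintro a ⟨s, t, m, n, k, ⟨pm, pn, pk⟩, h⟩
    refine ⟨s, t, -((-1)^s * m), -((-1)^t * n), -((-1)^(s+t) * k), ⟨?_, ?_, ?_⟩, fun p => ?_⟩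
    · push_cast; rw [zmod2_negone_pow, pm, one_mul, zmod2_neg]
    · push_cast; rw [zmod2_negone_pow, pn, one_mul, zmod2_neg]
    · push_cast; rw [zmod2_negone_pow, pk, one_mul, zmod2_neg]
    · have hp := h (a⁻¹ p)
      rw [← Equiv.Perm.mul_apply, mul_inv_cancel, Equiv.Perm.one_apply] at hp
      simp only [Prod.ext_iff] at hp ⊢
      obtain ⟨h1, h2, h3⟩ := hp
      have e1 := neg_one_sq_pow s
      have e2 := neg_one_sq_pow t
      have e3 := neg_one_sq_pow (s + t)
      refine ⟨?_, ?_, ?_⟩ <;> push_cast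
      · linear_combination (-(-1:ℝ)^s) * h1 - (a⁻¹ p).1 * e1
      · linear_combination (-(-1:ℝ)^t) * h2 - (a⁻¹ p).2.1 * e2
      · linear_combination (-(-1:ℝ)^(s+t)) * h3 - (a⁻¹ p).2.2 * e3

lemma GammaT_le_SGT : GammaT ≤ SGT := by
  rw [GammaT, Subgroup.closure_le]
  rintro γ hγ
  simp only [Set.mem_insert_iff, Set.mem_singleton_iff] at hγ
  rcases hγ with rfl | rfl | rfl | rfl
  · exact ⟨0, 1, 0, 0, fun p => by
      constructor
      · simp [cxy, transl_apply, Prod.fst_add, Prod.snd_add]; ring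
      · simp [transl_apply, Prod.snd_add]⟩
  · exact ⟨0, 0, 1, 0, fun p => by
      constructor
      · simp [cxy, transl_apply, Prod.fst_add, Prod.snd_add]; ring
      · simp [transl_apply, Prod.snd_add]⟩
  · exact ⟨0, 0, 0, 1, fun p => by
      constructor
      · simp [cxy, transl_apply, Prod.fst_add, Prod.snd_add]
      · simp [transl_apply, Prod.snd_add]⟩
  · exact ⟨1, 0, 0, 0, fun p => by
      constructor
      · simp only [cxy, tauE, Equiv.coe_fn_mk, pow_one]
        push_cast
        linear_combination (-(p.2.1 : ℂ)) * I_mul_I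
      · simp [tauE]⟩

lemma GammaD_le_SGD : GammaD ≤ SGD := by
  rw [GammaD, Subgroup.closure_le]
  rintro γ hγ
  simp only [Set.mem_insert_iff, Set.mem_singleton_iff] at hγ
  rcases hγ with rfl | rfl | rfl | rfl | rfl
  · exact ⟨0, 0, 2, 0, 0, ⟨by decide, by decide, by decide⟩, fun p => by
      simp [transl_apply, Prod.ext_iff, Prod.fst_add, Prod.snd_add] <;> norm_num⟩
  · exact ⟨0, 0, 0, 2, 0, ⟨by decide, by decide, by decide⟩, fun p => by
      simp [transl_apply, Prod.ext_iff, Prod.fst_add, Prod.snd_add] <;> norm_num⟩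
  · exact ⟨0, 0, 0, 0, 2, ⟨by decide, by decide, by decide⟩, fun p => by
      simp [transl_apply, Prod.ext_iff, Prod.fst_add, Prod.snd_add] <;> norm_num⟩
  · exact ⟨0, 1, 1, 0, 0, ⟨by decide, by decide, by decide⟩, fun p => by
      simp [rhoxE, Prod.ext_iff] <;> norm_num⟩
  · exact ⟨1, 0, 0, 1, 1, ⟨by decide, by decide, by decide⟩, fun p => by
      simp [rhoyE, Prod.ext_iff] <;> norm_num <;> ring⟩

lemma transl_lattice_of_PT {w : R3} (h : PT (transl w)) :
    ∃ m n k : ℤ, w = ((m : ℝ), (n : ℝ), 2 * (k : ℝ)) := by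
  obtain ⟨j, m, n, k, h⟩ := h
  have h0 := h (0, 0, 0)
  have h1 := h (1, 0, 0)
  simp only [transl_apply, cxy, Prod.fst_add, Prod.snd_add] at h0 h1
  norm_num at h0 h1
  -- from h1 and h0 : I ^ j = 1
  have hIj : (I : ℂ) ^ j = 1 := by
    have e0 := h0.1
    have e1 := h1.1
    linear_combination e0 - e1
  have hj4 : (4 : ℕ) ∣ j := four_dvd_of_I_pow j hIj
  obtain ⟨q, rfl⟩ := hj4
  -- real and imaginary parts
  have hre : w.1 = (m : ℝ) := by
    have := congrArg Complex.re h0.1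
    simpa using this
  have him : w.2.1 = (n : ℝ) := by
    have := congrArg Complex.im h0.1
    simpa using this
  have hz : w.2.2 = 2 * ((q + k : ℤ) : ℝ) := by
    have hw := h0.2
    push_cast at hw ⊢
    rw [hw]; ring
  exact ⟨m, n, q + k, by
    rw [Prod.ext_iff, Prod.ext_iff]
    exact ⟨hre, him, hz⟩⟩

lemma transl_lattice_of_PD {w : R3} (h : PD (transl w)) :
    ∃ m n k : ℤ, w = ((m : ℝ), (n : ℝ), 2 * (k : ℝ)) := by
  obtain ⟨s, t, m, n, k, ⟨pm, pn, pk⟩, h⟩ := h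
  have h0 := h (0, 0, 0)
  have h1 := h (1, 0, 0)
  have h2 := h (0, 1, 0)
  simp only [transl_apply, Prod.ext_iff, Prod.fst_add, Prod.snd_add] at h0 h1 h2
  norm_num at h0 h1 h2
  obtain ⟨e01, e02, e03⟩ := h0
  have hs : Even s := by
    have : ((-1 : ℝ)) ^ s = 1 := by
      have := h1.1
      linarith [e01]
    exact (neg_one_pow_eq_one_iff_even (by norm_num : (-1:ℝ) ≠ 1)).mp this
  have ht : Even t := by
    have : ((-1 : ℝ)) ^ t = 1 := by
      have := h2.2.1
      linarith [e02]
    exact (neg_one_pow_eq_one_iff_even (by norm_num : (-1:ℝ) ≠ 1)).mp this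
  have hscast : (s : ZMod 2) = 0 := by
    obtain ⟨c, rfl⟩ := hs; push_cast; exact zmod2_add_self _
  have htcast : (t : ZMod 2) = 0 := by
    obtain ⟨c, rfl⟩ := ht; push_cast; exact zmod2_add_self _
  have hm : (2 : ℤ) ∣ m := by
    have := (ZMod.intCast_zmod_eq_zero_iff_dvd m 2).mp (by rw [pm, htcast])
    exact_mod_cast this
  have hn : (2 : ℤ) ∣ n := by
    have := (ZMod.intCast_zmod_eq_zero_iff_dvd n 2).mp (by rw [pn, hscast])
    exact_mod_cast this
  have hk : (2 : ℤ) ∣ k := by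
    have := (ZMod.intCast_zmod_eq_zero_iff_dvd k 2).mp (by rw [pk, hscast])
    exact_mod_cast this
  obtain ⟨m', rfl⟩ := hm
  obtain ⟨n', rfl⟩ := hn
  obtain ⟨k', rfl⟩ := hk
  refine ⟨m', n', k', ?_⟩
  rw [Prod.ext_iff, Prod.ext_iff]
  refine ⟨?_, ?_, ?_⟩
  · push_cast at e01 ⊢; linarith
  · push_cast at e02 ⊢; linarith
  · push_cast at e03 ⊢; linarith

lemma genT1 : transl (1,0,0) ∈ GammaT := Subgroup.subset_closure (by simp)
lemma genT2 : transl (0,1,0) ∈ GammaT := Subgroup.subset_closure (by simp)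
lemma genT3 : transl ((0:ℝ),(0:ℝ),(2:ℝ)) ∈ GammaT := Subgroup.subset_closure (by simp)
lemma genD1 : transl (1,0,0) ∈ GammaD := Subgroup.subset_closure (by simp)
lemma genD2 : transl (0,1,0) ∈ GammaD := Subgroup.subset_closure (by simp)
lemma genD3 : transl ((0:ℝ),(0:ℝ),(2:ℝ)) ∈ GammaD := Subgroup.subset_closure (by simp)

end Aux

/-- the pure translations in `Γ_T` and in `Γ_D` are exactly the
translations by vectors of the lattice `ℤ × ℤ × 2ℤ`; moreover every element of
`Γ_T` (resp. `Γ_D`) whose linear part is the identity (i.e. of the form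
`x ↦ x + b`) is such a lattice translation. -/
theorem pure_translations :
    (∀ w : R3, transl w ∈ GammaT ↔
      ∃ m n k : ℤ, w = ((m : ℝ), (n : ℝ), 2 * (k : ℝ))) ∧
    (∀ w : R3, transl w ∈ GammaD ↔
      ∃ m n k : ℤ, w = ((m : ℝ), (n : ℝ), 2 * (k : ℝ))) ∧
    (∀ γ ∈ GammaT, ∀ b : R3, (∀ x : R3, γ x = x + b) →
      γ = transl b ∧ ∃ m n k : ℤ, b = ((m : ℝ), (n : ℝ), 2 * (k : ℝ))) ∧
    (∀ γ ∈ GammaD, ∀ b : R3, (∀ x : R3, γ x = x + b) →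
      γ = transl b ∧ ∃ m n k : ℤ, b = ((m : ℝ), (n : ℝ), 2 * (k : ℝ))) := by
  have hT : ∀ w : R3, transl w ∈ GammaT ↔
      ∃ m n k : ℤ, w = ((m : ℝ), (n : ℝ), 2 * (k : ℝ)) := by
    intro w
    constructor
    · intro hw
      exact transl_lattice_of_PT (GammaT_le_SGT hw)
    · rintro ⟨m, n, k, rfl⟩
      exact lattice_mem genT1 genT2 genT3 m n k
  have hD : ∀ w : R3, transl w ∈ GammaD ↔
      ∃ m n k : ℤ, w = ((m : ℝ), (n : ℝ), 2 * (k : ℝ)) := by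
    intro w
    constructor
    · intro hw
      exact transl_lattice_of_PD (GammaD_le_SGD hw)
    · rintro ⟨m, n, k, rfl⟩
      exact lattice_mem genD1 genD2 genD3 m n k
  refine ⟨hT, hD, ?_, ?_⟩
  · intro γ hγ b hb
    have hge : γ = transl b := Equiv.ext fun x => hb x
    exact ⟨hge, (hT b).mp (hge ▸ hγ)⟩
  · intro γ hγ b hb
    have hge : γ = transl b := Equiv.ext fun x => hb x
    exact ⟨hge, (hD b).mp (hge ▸ hγ)⟩
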